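/- Let A be a symmetric negative-definite real r×r matrix with a_{ij} ≥ 0 for all i ≠ j. If x, y ∈ ℝ^r satisfy (Ax)_i ≤ 0 and (Ay)_i ≤ 0 for all i, and x, y ≥ 0 componentwise, then z = min(x, y) (componentwise minimum) also satisfies (Az)_i ≤ 0 for all i. -/
import Mathlib

lemma aux19 (r : ℕ) (A : Matrix (Fin r) (Fin r) ℝ)
    (hoff : ∀ i j, i ≠ j → 0 ≤ A i j) (z w : Fin r → ℝ)
    (hzw : ∀ j, z j ≤ w j) (i : Fin r) (hi : z i = w i)
    (hw : A.mulVec w i ≤ 0) : A.mulVec z i ≤ 0 := by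
  refine le_trans ?_ hw
  unfold Matrix.mulVec dotProduct
  apply Finset.sum_le_sum
  intro j _
  rcases eq_or_ne j i with h | h
  · subst h; rw [hi]
  · exact mul_le_mul_of_nonneg_left (hzw j) (hoff i j (Ne.symm h))

/-- Let `A` be a symmetric negative-definite real `r × r` matrix with `aᵢⱼ ≥ 0` for
`i ≠ j`.  If `x, y ≥ 0` componentwise satisfy `(Ax)ᵢ ≤ 0` and `(Ay)ᵢ ≤ 0` for all `i`,
then the componentwise minimum `z = min(x, y)` also satisfies `(Az)ᵢ ≤ 0` for all
`i`. -/
theorem stmt19 (r : ℕ) (A : Matrix (Fin r) (Fin r) ℝ) (hsymm : A.IsSymm)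
    (hneg : (-A).PosDef) (hoff : ∀ i j, i ≠ j → 0 ≤ A i j)
    (x y : Fin r → ℝ) (hx0 : ∀ i, 0 ≤ x i) (hy0 : ∀ i, 0 ≤ y i)
    (hx : ∀ i, A.mulVec x i ≤ 0) (hy : ∀ i, A.mulVec y i ≤ 0) :
    ∀ i, A.mulVec (fun j => min (x j) (y j)) i ≤ 0 := by
  intro i
  rcases le_total (x i) (y i) with h | h
  · exact aux19 r A hoff _ x (fun j => min_le_left _ _) i (min_eq_left h) (hx i)
  · exact aux19 r A hoff _ y (fun j => min_le_right _ _) i (min_eq_right h) (hy i)
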